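/- Let G be a connected finite simple graph on n vertices with diameter d. Then for every real number μ one has m_G(μ) ≤ n − d; moreover, if μ is not an eigenvalue of the path P_{d+1}, i.e., μ ∉ { 2·cos(kπ/(d+2)) : k = 1, …, d+1 }, then m_G(μ) ≤ n − d − 1. -/

import Mathlib

open Classical in
/-- The adjacency matrix of a finite simple graph over `ℝ`. -/
noncomputable def adjMat {V : Type} [Fintype V] (G : SimpleGraph V) : Matrix V V ℝ :=
  Matrix.of fun i j => if G.Adj i j then (1 : ℝ) else 0

/-- `eigMult G μ` is the multiplicity of `μ` as an eigenvalue of the adjacency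
matrix of `G`, i.e. the dimension of the kernel of `A(G) - μ·I`. -/
noncomputable def eigMult {V : Type} [Fintype V] [DecidableEq V]
    (G : SimpleGraph V) (μ : ℝ) : ℕ :=
  Module.finrank ℝ (LinearMap.ker (adjMat G - μ • (1 : Matrix V V ℝ)).mulVecLin)

section Aux
open Real

/-- Scaled Chebyshev-like sequence: `cheb' x n = U_n(x)` (second kind). -/
noncomputable def cheb' (x : ℝ) : ℕ → ℝ
  | 0 => 1
  | 1 => 2 * x
  | (n + 2) => 2 * x * cheb' x (n + 1) - cheb' x n

lemma cheb'_trig (θ : ℝ) (n : ℕ) :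
    cheb' (Real.cos θ) n * Real.sin θ = Real.sin ((n + 1) * θ) := by
  induction n using Nat.twoStepInduction with
  | zero => simp [cheb']
  | one =>
      simp only [cheb']
      rw [show ((1:ℕ) + 1 : ℝ) * θ = θ + θ by push_cast; ring, Real.sin_add]
      ring_nf
  | more n ih1 ih2 =>
      simp only [cheb']
      push_cast
      push_cast at ih1 ih2
      have sin_rec : ∀ a : ℝ, Real.sin (a + θ) = 2 * Real.cos θ * Real.sin a - Real.sin (a - θ) := by
        intro a; rw [Real.sin_add, Real.sin_sub]; ring
      have e3 : ((n:ℝ) + 2 + 1) * θ = ((n:ℝ) + 1 + 1) * θ + θ := by ring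
      have e4 : ((n:ℝ) + 1 + 1) * θ - θ = ((n:ℝ) + 1) * θ := by ring
      rw [e3, sin_rec, e4, ← ih1, ← ih2]
      ring

lemma cheb'_ge (x : ℝ) (hx : 1 ≤ x) (n : ℕ) :
    ((n : ℝ) + 1 ≤ cheb' x n) ∧ (cheb' x n + 1 ≤ cheb' x (n + 1)) := by
  induction n with
  | zero => simp [cheb']; linarith
  | succ n ih =>
      obtain ⟨h1, h2⟩ := ih
      constructor
      · push_cast; linarith
      · show cheb' x (n+1) + 1 ≤ cheb' x (n+2)
        simp only [cheb']
        nlinarith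

lemma cheb'_neg (x : ℝ) (n : ℕ) : cheb' (-x) n = (-1) ^ n * cheb' x n := by
  induction n using Nat.twoStepInduction with
  | zero => simp [cheb']
  | one => simp [cheb']
  | more n ih1 ih2 =>
      simp only [cheb', ih1, ih2, pow_succ]
      ring

lemma cheb'_ne_zero (μ : ℝ) (m : ℕ)
    (h : ∀ k : ℕ, 1 ≤ k → k ≤ m → μ ≠ 2 * Real.cos (k * Real.pi / (m + 1))) :
    cheb' (μ / 2) m ≠ 0 := by
  set x := μ / 2 with hx
  rcases le_or_gt 1 x with h1 | h1
  · have hg := (cheb'_ge x h1 m).1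
    exact ne_of_gt (lt_of_lt_of_le (by positivity) hg)
  rcases le_or_gt x (-1) with h2 | h2
  · have : 1 ≤ -x := by linarith
    have hg := (cheb'_ge (-x) this m).1
    have hrw : cheb' x m = (-1)^m * cheb' (-x) m := by
      have := cheb'_neg (-x) m
      simpa using this
    rw [hrw]
    have hpos : (0:ℝ) < cheb' (-x) m := lt_of_lt_of_le (by positivity) hg
    intro hc
    rcases neg_one_pow_eq_or ℝ m with hp | hp <;> rw [hp] at hc <;> nlinarith [hpos]
  · -- -1 < x < 1
    set θ := Real.arccos x with hθ
    have hx1 : -1 ≤ x := by linarith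
    have hx2 : x ≤ 1 := by linarith
    have hcos : Real.cos θ = x := Real.cos_arccos hx1 hx2
    have hθpos : 0 < θ := Real.arccos_pos.2 h1
    have hθlt : θ < Real.pi := lt_of_le_of_ne (Real.arccos_le_pi x)
      (by rw [ne_eq, Real.arccos_eq_pi]; linarith)
    have hsin : 0 < Real.sin θ := Real.sin_pos_of_pos_of_lt_pi hθpos hθlt
    intro hc
    have htrig := cheb'_trig θ m
    rw [hcos, hc, zero_mul] at htrig
    obtain ⟨k, hk⟩ := Real.sin_eq_zero_iff.1 htrig.symm
    have hπ : 0 < Real.pi := Real.pi_pos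
    have hkpos : (0:ℝ) < (k:ℝ) * Real.pi := by
      rw [hk]; positivity
    have hklt : (k:ℝ) * Real.pi < ((m:ℝ) + 1) * Real.pi := by
      rw [hk]
      have : (0:ℝ) < (m:ℝ) + 1 := by positivity
      nlinarith
    have hk1 : 1 ≤ k := by
      by_contra hcon
      push_neg at hcon
      have : (k:ℝ) ≤ 0 := by exact_mod_cast Int.lt_add_one_iff.mp (by exact_mod_cast hcon)
      nlinarith
    have hkm : (k:ℝ) ≤ (m:ℝ) := by
      have : (k:ℝ) < (m:ℝ) + 1 := by
        by_contra hcon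
        push_neg at hcon
        nlinarith
      have : k < (m:ℤ) + 1 := by exact_mod_cast this
      have : k ≤ (m:ℤ) := by omega
      exact_mod_cast this
    set kn : ℕ := k.toNat with hkn
    have hkcast : (kn : ℝ) = (k : ℝ) := by
      have h0 : (0:ℤ) ≤ k := by omega
      exact_mod_cast congrArg (Int.cast : ℤ → ℝ) (Int.toNat_of_nonneg h0)
    have hknm : kn ≤ m := by
      have : (kn : ℝ) ≤ (m : ℝ) := by rw [hkcast]; exact hkm
      exact_mod_cast this
    have hkn1 : 1 ≤ kn := by omega
    apply h kn hkn1 hknm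
    have hθeq : θ = (kn : ℝ) * Real.pi / ((m:ℝ) + 1) := by
      rw [hkcast, hk]
      field_simp
    rw [← hθeq, hcos, hx]
    ring



/-- Tridiagonal matrix `A(P_m) - μ I`. -/
noncomputable def pathMat (m : ℕ) (μ : ℝ) : Matrix (Fin m) (Fin m) ℝ :=
  Matrix.of fun i j =>
    if (i : ℕ) = j then -μ else if (i : ℕ) + 1 = j ∨ (j : ℕ) + 1 = i then 1 else 0

lemma pathMat_succ_succ (m : ℕ) (μ : ℝ) :
    (pathMat (m + 1) μ).submatrix Fin.succ Fin.succ = pathMat m μ := by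
  ext i j
  simp only [pathMat, Matrix.submatrix_apply, Matrix.of_apply, Fin.val_succ]
  split_ifs <;> first | rfl | omega | (simp_all; omega) | simp_all

lemma det_pathMat_rec (m : ℕ) (μ : ℝ) :
    (pathMat (m + 2) μ).det = -μ * (pathMat (m + 1) μ).det - (pathMat m μ).det := by
  rw [Matrix.det_succ_row_zero]
  rw [Fin.sum_univ_succ, Fin.sum_univ_succ]
  have hrest : ∀ j : Fin m, (-1 : ℝ) ^ ((j.succ.succ : Fin (m+2)) : ℕ) *
      pathMat (m+2) μ 0 j.succ.succ *
      ((pathMat (m+2) μ).submatrix Fin.succ j.succ.succ.succAbove).det = 0 := by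
    intro j
    have : pathMat (m+2) μ 0 j.succ.succ = 0 := by
      simp only [pathMat, Matrix.of_apply, Fin.val_zero, Fin.val_succ]
      split_ifs <;> first | rfl | omega | (simp_all; omega) | simp_all
    rw [this]; ring
  rw [Finset.sum_eq_zero (fun j _ => hrest j)]
  have h00 : pathMat (m+2) μ 0 0 = -μ := by
    simp [pathMat]
  have h01 : pathMat (m+2) μ 0 1 = 1 := by
    simp only [pathMat, Matrix.of_apply]
    norm_num
  have hs0 : (pathMat (m+2) μ).submatrix Fin.succ ((0 : Fin (m+2)).succAbove)
      = pathMat (m+1) μ := by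
    rw [Fin.succAbove_zero]
    exact pathMat_succ_succ (m+1) μ
  -- minor at (0,1): expand along first column
  have hminor : ((pathMat (m+2) μ).submatrix Fin.succ ((1 : Fin (m+2)).succAbove)).det
      = (pathMat m μ).det := by
    set B := (pathMat (m+2) μ).submatrix Fin.succ ((1 : Fin (m+2)).succAbove) with hB
    rw [Matrix.det_succ_column_zero, Fin.sum_univ_succ]
    have hB00 : B 0 0 = 1 := by
      simp only [hB, Matrix.submatrix_apply, pathMat, Matrix.of_apply]
      have h1 : ((1 : Fin (m+2)).succAbove 0 : ℕ) = 0 := rfl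
      have h2 : ((Fin.succ 0 : Fin (m+2)) : ℕ) = 1 := rfl
      rw [show (1 : Fin (m+2)).succAbove 0 = 0 from rfl]
      norm_num
    have hBrest : ∀ i : Fin m, (-1 : ℝ) ^ ((i.succ : Fin (m+1)) : ℕ) * B i.succ 0 *
        (B.submatrix i.succ.succAbove Fin.succ).det = 0 := by
      intro i
      have : B i.succ 0 = 0 := by
        simp only [hB, Matrix.submatrix_apply, pathMat, Matrix.of_apply]
        rw [show (1 : Fin (m+2)).succAbove 0 = 0 from rfl]
        simp only [Fin.val_succ, Fin.val_zero]
        split_ifs <;> first | rfl | omega | (simp_all; omega) | simp_all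
      rw [this]; ring
    rw [Finset.sum_eq_zero (fun i _ => hBrest i), hB00]
    have : B.submatrix ((0 : Fin (m+1)).succAbove) Fin.succ = pathMat m μ := by
      rw [Fin.succAbove_zero]
      ext i j
      simp only [hB, Matrix.submatrix_apply, pathMat, Matrix.of_apply]
      have hc : (((1 : Fin (m+2)).succAbove j.succ : Fin (m+2)) : ℕ) = (j : ℕ) + 2 := by
        rw [Fin.succAbove_of_le_castSucc]
        · simp [Fin.val_succ]
        · rw [Fin.le_iff_val_le_val]; simp
      rw [hc]
      simp only [Fin.val_succ]
      split_ifs <;> first | rfl | omega | (simp_all; omega) | simp_all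
    rw [this]
    simp
  simp only [Fin.succ_zero_eq_one, Fin.val_zero, Fin.val_one, pow_zero, pow_one,
    h00, h01, hs0, hminor]
  ring

lemma det_pathMat (m : ℕ) (μ : ℝ) :
    (pathMat m μ).det = (-1) ^ m * cheb' (μ / 2) m := by
  induction m using Nat.twoStepInduction with
  | zero => simp [cheb']
  | one =>
      rw [show (pathMat 1 μ).det = pathMat 1 μ 0 0 from Matrix.det_fin_one _]
      simp [pathMat, cheb']
      ring
  | more n ih1 ih2 =>
      rw [det_pathMat_rec, ih1, ih2]
      show _ = (-1)^(n+2) * (2 * (μ/2) * cheb' (μ/2) (n+1) - cheb' (μ/2) n)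
      rw [pow_succ, pow_succ]
      ring

section Rank
variable {V : Type} [Fintype V] [DecidableEq V]

/-- Any submatrix has rank at most the rank of the original matrix. -/
lemma rank_submatrix_le' {r : ℕ} (A : Matrix V V ℝ) (f g : Fin r → V) :
    (A.submatrix f g).rank ≤ A.rank := by
  classical
  set Q : Matrix (Fin r) V ℝ := Matrix.of fun i v => if v = f i then (1:ℝ) else 0 with hQ
  set P : Matrix V (Fin r) ℝ := Matrix.of fun v j => if v = g j then (1:ℝ) else 0 with hP
  have key : A.submatrix f g = Q * (A * P) := by
    ext i j
    simp only [Matrix.submatrix_apply, Matrix.mul_apply, hQ, hP, Matrix.of_apply]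
    rw [Finset.sum_eq_single (f i)]
    · simp only [if_pos rfl, one_mul]
      rw [Finset.sum_eq_single (g j)]
      · simp
      · intro b _ hb; simp [hb]
      · intro hb; exact absurd (Finset.mem_univ _) hb
    · intro b _ hb; simp [hb]
    · intro hb; exact absurd (Finset.mem_univ _) hb
  rw [key]
  exact le_trans (Matrix.rank_mul_le_right _ _) (Matrix.rank_mul_le_left _ _)

lemma eigMult_le_of_det_ne_zero (G : SimpleGraph V) (μ : ℝ) {r : ℕ} (f g : Fin r → V)
    (hdet : (((adjMat G - μ • (1 : Matrix V V ℝ))).submatrix f g).det ≠ 0) :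
    eigMult G μ ≤ Fintype.card V - r := by
  set M := adjMat G - μ • (1 : Matrix V V ℝ) with hM
  have hr : r ≤ M.rank := by
    have hu : IsUnit (M.submatrix f g) :=
      (Matrix.isUnit_iff_isUnit_det _).2 (isUnit_iff_ne_zero.2 hdet)
    have := Matrix.rank_of_isUnit _ hu
    rw [Fintype.card_fin] at this
    calc r = (M.submatrix f g).rank := this.symm
    _ ≤ M.rank := rank_submatrix_le' M f g
  have hrn : M.rank + eigMult G μ = Fintype.card V := by
    have := LinearMap.finrank_range_add_finrank_ker M.mulVecLin
    rwa [Module.finrank_fintype_fun_eq_card] at this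
  omega

end Rank

section WalkDist
variable {V : Type} {G : SimpleGraph V} {u v : V}

lemma exists_walk_getVert (w : G.Walk u v) (i n : ℕ) (h : i + n ≤ w.length) :
    ∃ q : G.Walk (w.getVert i) (w.getVert (i + n)), q.length = n := by
  induction n with
  | zero => exact ⟨SimpleGraph.Walk.nil, rfl⟩
  | succ n ih =>
      obtain ⟨q, hq⟩ := ih (by omega)
      have hadj : G.Adj (w.getVert (i + n)) (w.getVert (i + n + 1)) :=
        w.adj_getVert_succ (by omega)
      exact ⟨q.concat hadj, by simp [hq]⟩

lemma dist_getVert_le (w : G.Walk u v) (i j : ℕ) (hij : i ≤ j) (hj : j ≤ w.length) :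
    G.dist (w.getVert i) (w.getVert j) ≤ j - i := by
  obtain ⟨q, hq⟩ := exists_walk_getVert w i (j - i) (by omega)
  have h := SimpleGraph.dist_le q
  rw [hq, show i + (j - i) = j from by omega] at h
  exact h

lemma dist_getVert_eq (hG : G.Connected) (w : G.Walk u v)
    (hlen : w.length = G.dist u v) (i j : ℕ) (hij : i ≤ j) (hj : j ≤ w.length) :
    G.dist (w.getVert i) (w.getVert j) = j - i := by
  have h1 : G.dist (w.getVert i) (w.getVert j) ≤ j - i := dist_getVert_le w i j hij hj
  have h2 : G.dist u (w.getVert i) ≤ i := by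
    have := dist_getVert_le w 0 i (by omega) (by omega)
    simpa [SimpleGraph.Walk.getVert_zero] using this
  have h3 : G.dist (w.getVert j) v ≤ w.length - j := by
    have := dist_getVert_le w j w.length hj le_rfl
    simpa [SimpleGraph.Walk.getVert_length] using this
  have htri : G.dist u v ≤ G.dist u (w.getVert i) + G.dist (w.getVert i) (w.getVert j)
      + G.dist (w.getVert j) v :=
    le_trans (hG.dist_triangle (v := w.getVert j))
      (by have := hG.dist_triangle (u := u) (v := w.getVert i) (w := w.getVert j); omega)
  omega

end WalkDist

end Aux

/-- If `G` is connected on `n` vertices with diameter `d`, then `m_G(μ) ≤ n - d` for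
every real `μ`; moreover if `μ` is not an eigenvalue of the path `P_{d+1}`, i.e.
`μ ∉ {2cos(kπ/(d+2)) : k = 1, …, d+1}`, then `m_G(μ) ≤ n - d - 1`. -/
theorem stmt10 {V : Type} [Fintype V] [DecidableEq V] (G : SimpleGraph V)
    (hG : G.Connected) :
    (∀ μ : ℝ, eigMult G μ ≤ Fintype.card V - G.diam) ∧
    (∀ μ : ℝ,
      (∀ k : ℕ, 1 ≤ k → k ≤ G.diam + 1 →
        μ ≠ 2 * Real.cos (k * Real.pi / (G.diam + 2))) →
      eigMult G μ ≤ Fintype.card V - G.diam - 1) := by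
  classical
  have hne : Nonempty V := hG.nonempty
  set d := G.diam with hd
  obtain ⟨u, v, huv⟩ := SimpleGraph.exists_dist_eq_diam (G := G)
  obtain ⟨w, hw⟩ := (hG.preconnected u v).exists_walk_length_eq_dist
  have hlen : w.length = d := by rw [hw, huv]
  set p : ℕ → V := w.getVert with hp
  have hdist : ∀ a b : ℕ, a ≤ b → b ≤ d → G.dist (p a) (p b) = b - a := by
    intro a b hab hbd
    exact dist_getVert_eq hG w hw a b hab (by omega)
  have hnep : ∀ a b : ℕ, a < b → b ≤ d → p a ≠ p b := by
    intro a b hab hbd hcon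
    have h0 := hdist a b (by omega) hbd
    rw [hcon, SimpleGraph.dist_self] at h0
    omega
  have hadjp : ∀ a : ℕ, a + 1 ≤ d → G.Adj (p a) (p (a + 1)) := by
    intro a ha
    exact w.adj_getVert_succ (by omega)
  have hnadj : ∀ a b : ℕ, a + 2 ≤ b → b ≤ d → ¬ G.Adj (p a) (p b) := by
    intro a b hab hbd hcon
    have h1 : G.dist (p a) (p b) ≤ 1 :=
      SimpleGraph.dist_le (SimpleGraph.Walk.cons hcon SimpleGraph.Walk.nil)
    have h0 := hdist a b (by omega) hbd
    omega
  -- entry formula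
  have hentry : ∀ (μ : ℝ) (x y : V),
      (adjMat G - μ • (1 : Matrix V V ℝ)) x y
        = (if G.Adj x y then (1:ℝ) else 0) - μ * (if x = y then (1:ℝ) else 0) := by
    intro μ x y
    simp [adjMat, Matrix.sub_apply, Matrix.smul_apply, Matrix.one_apply, smul_eq_mul]
  constructor
  · -- first part
    intro μ
    apply eigMult_le_of_det_ne_zero G μ (fun i : Fin d => p i) (fun i : Fin d => p (i + 1))
    set N := (adjMat G - μ • (1 : Matrix V V ℝ)).submatrix
      (fun i : Fin d => p i) (fun i : Fin d => p ((i : ℕ) + 1)) with hN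
    have htri : N.BlockTriangular OrderDual.toDual := by
      intro i j hij
      have hij' : (i : ℕ) < (j : ℕ) := hij
      simp only [hN, Matrix.submatrix_apply]
      rw [hentry]
      rw [if_neg (hnadj i (j+1) (by omega) (by omega)),
        if_neg (hnep i ((j:ℕ)+1) (by omega) (by omega))]
      ring
    rw [Matrix.det_of_lowerTriangular N htri]
    have hdiag : ∀ i : Fin d, N i i = 1 := by
      intro i
      simp only [hN, Matrix.submatrix_apply]
      rw [hentry]
      rw [if_pos (hadjp i (by omega)), if_neg (hnep i ((i:ℕ)+1) (by omega) (by omega))]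
      ring
    rw [Finset.prod_congr rfl (fun i _ => hdiag i)]
    simp
  · -- second part
    intro μ hμ
    have hsub : (adjMat G - μ • (1 : Matrix V V ℝ)).submatrix
        (fun i : Fin (d+1) => p i) (fun i : Fin (d+1) => p i) = pathMat (d+1) μ := by
      ext i j
      simp only [Matrix.submatrix_apply, pathMat, Matrix.of_apply]
      rw [hentry]
      by_cases h1 : (i : ℕ) = (j : ℕ)
      · have : (i : ℕ) = (j : ℕ) := h1
        have hpe : p i = p j := by rw [this]
        rw [if_pos h1, hpe, if_neg (G.irrefl), if_pos rfl]
        ring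
      · rw [if_neg h1]
        by_cases h2 : (i : ℕ) + 1 = (j : ℕ) ∨ (j : ℕ) + 1 = (i : ℕ)
        · rw [if_pos h2]
          have hadj : G.Adj (p i) (p j) := by
            rcases h2 with h2 | h2
            · have := hadjp i (by omega)
              rwa [h2] at this
            · have := hadjp j (by omega)
              rw [h2] at this
              exact this.symm
          rw [if_pos hadj, if_neg (G.ne_of_adj hadj)]
          ring
        · rw [if_neg h2]
          push_neg at h2
          have hnadj' : ¬ G.Adj (p i) (p j) := by
            rcases lt_or_gt_of_ne h1 with hlt | hlt
            · exact hnadj i j (by omega) (by omega)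
            · intro hcon
              exact hnadj j i (by omega) (by omega) hcon.symm
          have hne' : p i ≠ p j := by
            rcases lt_or_gt_of_ne h1 with hlt | hlt
            · exact hnep i j (by omega) (by omega)
            · exact (hnep j i (by omega) (by omega)).symm
          rw [if_neg hnadj', if_neg hne']
          ring
    have hdet : ((adjMat G - μ • (1 : Matrix V V ℝ)).submatrix
        (fun i : Fin (d+1) => p i) (fun i : Fin (d+1) => p i)).det ≠ 0 := by
      rw [hsub, det_pathMat]
      have hch : cheb' (μ / 2) (d + 1) ≠ 0 := by
        apply cheb'_ne_zero
        intro k hk1 hk2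
        have h' := hμ k hk1 hk2
        have hcast : ((d + 1 : ℕ) : ℝ) + 1 = (d : ℝ) + 2 := by push_cast; ring
        rw [hcast]
        exact h'
      intro hcon
      rcases mul_eq_zero.1 hcon with hc | hc
      · exact pow_ne_zero _ (by norm_num : (-1:ℝ) ≠ 0) hc
      · exact hch hc
    have := eigMult_le_of_det_ne_zero G μ _ _ hdet
    omega
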